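/- Under the hypotheses ensuring the Poincaré inequality on M_g and the compactness of G and G′, the energy J(φ) = ∫_Ω|∇φ|^p satisfies the Palais-Smale condition on the C¹ manifold N_g = {φ ∈ W^{1,p}(Ω) : ∫_{∂Ω} g|φ|^p = 1}: any sequence (φ_n) ⊂ N_g with J(φ_n) → λ ∈ ℝ and ‖dJ(φ_n)‖ → 0 has a subsequence converging in N_g. -/

import Mathlib

open MeasureTheory Filter Set Topology

/-- Weak convergence of a sequence in a normed space. -/
def WeakConv {X : Type*} [NormedAddCommGroup X] [NormedSpace ℝ X] (u : ℕ → X) (v : X) : Prop :=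
  ∀ ℓ : X →L[ℝ] ℝ, Tendsto (fun n => ℓ (u n)) atTop (𝓝 (ℓ v))

/-- The norm of the differential of `J` on the manifold `N_g = G⁻¹(1)`:
`‖dJ(φ)‖ = min_{λ∈ℝ} ‖(J′ - λG′)(φ)‖`. -/
noncomputable def dJnorm {X : Type*} [NormedAddCommGroup X] [NormedSpace ℝ X]
    (J' G' : X → X →L[ℝ] ℝ) (φ : X) : ℝ :=
  sInf (Set.range fun l : ℝ => ‖J' φ - l • G' φ‖)

/-- Palais–Smale condition for `J(φ)=∫_Ω|∇φ|^p` on `N_g = {φ : ∫_{∂Ω} g|φ|^p = 1}`: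
any sequence `(φ_n) ⊂ N_g` with `J(φ_n) → λ` and `‖dJ(φ_n)‖ → 0` has a subsequence
converging in `N_g`.  Here `X` models `W^{1,p}(Ω)`; `J, G` are the energy and boundary
functionals with derivatives `J′, G′`; the hypotheses encode that `J′` is of class
`α(W^{1,p}(Ω))`, `G′` is compact, `N_g` is weakly closed, `J` is coercive on `N_g`,
`X` is reflexive, and `⟨J′φ,φ⟩ = pJ(φ)`, `⟨G′φ,φ⟩ = pG(φ)`. -/
theorem palais_smale_on_Ng
    {X : Type*} [NormedAddCommGroup X] [NormedSpace ℝ X] (p : ℝ) (hp : 1 < p)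
    (J G : X → ℝ) (J' G' : X → X →L[ℝ] ℝ)
    (hJφ : ∀ φ : X, J' φ φ = p * J φ) (hGφ : ∀ φ : X, G' φ φ = p * G φ)
    (hJ'cont : Continuous J') (hG'cont : Continuous G')
    -- `J′` is of class `α(W^{1,p}(Ω))`:
    (halpha : ∀ (u : ℕ → X) (v : X), WeakConv u v →
      limsup (fun n => J' (u n) (u n - v)) atTop ≤ 0 → Tendsto u atTop (𝓝 v))
    -- `G′` is compact:
    (hG'cpt : ∀ (u : ℕ → X) (v : X), WeakConv u v →
      Tendsto (fun n => ‖G' (u n) - G' v‖) atTop (𝓝 0))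
    -- `N_g` is weakly closed:
    (hwclosed : ∀ (u : ℕ → X) (v : X), WeakConv u v → (∀ n, G (u n) = 1) → G v = 1)
    -- `J` is coercive on `N_g`:
    (hcoercive : ∀ c : ℝ, ∃ R : ℝ, ∀ φ : X, G φ = 1 → J φ ≤ c → ‖φ‖ ≤ R)
    -- reflexivity:
    (hreflex : ∀ u : ℕ → X, (∃ R : ℝ, ∀ n, ‖u n‖ ≤ R) →
      ∃ (v : X) (s : ℕ → ℕ), StrictMono s ∧ WeakConv (u ∘ s) v) :
    ∀ (u : ℕ → X) (c : ℝ), (∀ n, G (u n) = 1) →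
      Tendsto (fun n => J (u n)) atTop (𝓝 c) →
      Tendsto (fun n => dJnorm J' G' (u n)) atTop (𝓝 0) →
      ∃ (v : X) (s : ℕ → ℕ), StrictMono s ∧ G v = 1 ∧ Tendsto (u ∘ s) atTop (𝓝 v) := by

  intro u c hGu hJc hdJ
  -- J values bounded above
  obtain ⟨C, hC⟩ : ∃ C : ℝ, ∀ n, J (u n) ≤ C := by
    obtain ⟨C, hC⟩ := hJc.bddAbove_range
    exact ⟨C, fun n => hC ⟨n, rfl⟩⟩
  obtain ⟨R, hR⟩ := hcoercive C
  have hRu : ∀ n, ‖u n‖ ≤ R := fun n => hR (u n) (hGu n) (hC n)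
  obtain ⟨v, s, hs, hw⟩ := hreflex u ⟨R, hRu⟩
  have hGv : G v = 1 := hwclosed (u ∘ s) v hw (fun n => hGu (s n))
  -- choose near-minimizers l n
  have hlex : ∀ n : ℕ, ∃ l : ℝ,
      ‖J' (u n) - l • G' (u n)‖ < dJnorm J' G' (u n) + 1 / (n + 1) := by
    intro n
    have hne : (Set.range fun l : ℝ => ‖J' (u n) - l • G' (u n)‖).Nonempty :=
      ⟨_, ⟨0, rfl⟩⟩
    have hpos : (0 : ℝ) < 1 / (n + 1) := by positivity
    obtain ⟨a, ⟨l, rfl⟩, ha⟩ := Real.lt_sInf_add_pos hne hpos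
    exact ⟨l, ha⟩
  choose l hl using hlex
  set ε : ℕ → ℝ := fun n => ‖J' (u n) - l n • G' (u n)‖ with hεdef
  have hε0 : Tendsto ε atTop (𝓝 0) := by
    have h1 : Tendsto (fun n : ℕ => dJnorm J' G' (u n) + 1 / (n + 1)) atTop (𝓝 0) := by
      have := hdJ.add tendsto_one_div_add_atTop_nhds_zero_nat
      simpa using this
    exact squeeze_zero (fun n => norm_nonneg _) (fun n => (hl n).le) h1
  have hR0 : 0 ≤ R := le_trans (norm_nonneg _) (hRu 0)
  -- l n → c
  set δ : ℕ → ℝ := fun n => p * J (u n) - l n * p with hδdef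
  have hδ0 : Tendsto δ atTop (𝓝 0) := by
    refine squeeze_zero_norm (a := fun n => ε n * R) ?_ ?_
    · intro n
      have h1 : (J' (u n) - l n • G' (u n)) (u n) = δ n := by
        simp [hδdef, hJφ, hGφ, hGu n]
      have h2 : ‖(J' (u n) - l n • G' (u n)) (u n)‖ ≤ ε n * ‖u n‖ :=
        (J' (u n) - l n • G' (u n)).le_opNorm (u n)
      rw [h1] at h2
      calc ‖δ n‖ ≤ ε n * ‖u n‖ := h2
        _ ≤ ε n * R := by
            have : (0:ℝ) ≤ ε n := norm_nonneg _
            nlinarith [hRu n, norm_nonneg (u n)]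
    · simpa using hε0.mul_const R
  have hlc : Tendsto l atTop (𝓝 c) := by
    have hp0 : p ≠ 0 := by linarith
    have heq : l = fun n => (p * J (u n) - δ n) / p := by
      funext n; field_simp [hδdef]; simp only [hδdef]; ring
    rw [heq]
    have : Tendsto (fun n => (p * J (u n) - δ n) / p) atTop (𝓝 ((p * c - 0) / p)) :=
      (((hJc.const_mul p).sub hδ0)).div_const p
    simpa [hp0] using this
  -- key convergence
  have hεs : Tendsto (fun n => ε (s n)) atTop (𝓝 0) := hε0.comp hs.tendsto_atTop
  have hls : Tendsto (fun n => l (s n)) atTop (𝓝 c) := hlc.comp hs.tendsto_atTop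
  have hGcs : Tendsto (fun n => ‖G' (u (s n)) - G' v‖) atTop (𝓝 0) := hG'cpt (u ∘ s) v hw
  have hT1 : Tendsto (fun n => (J' (u (s n)) - l (s n) • G' (u (s n))) (u (s n) - v))
      atTop (𝓝 0) := by
    refine squeeze_zero_norm (a := fun n => ε (s n) * (R + ‖v‖)) ?_ ?_
    · intro n
      calc ‖(J' (u (s n)) - l (s n) • G' (u (s n))) (u (s n) - v)‖
          ≤ ε (s n) * ‖u (s n) - v‖ := ContinuousLinearMap.le_opNorm _ _
        _ ≤ ε (s n) * (R + ‖v‖) := by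
            have h1 : ‖u (s n) - v‖ ≤ R + ‖v‖ := by
              calc ‖u (s n) - v‖ ≤ ‖u (s n)‖ + ‖v‖ := norm_sub_le _ _
                _ ≤ R + ‖v‖ := by linarith [hRu (s n)]
            have : (0:ℝ) ≤ ε (s n) := norm_nonneg _
            nlinarith
    · simpa using hεs.mul_const (R + ‖v‖)
  have hT2 : Tendsto (fun n => (G' (u (s n)) - G' v) (u (s n) - v)) atTop (𝓝 0) := by
    refine squeeze_zero_norm (a := fun n => ‖G' (u (s n)) - G' v‖ * (R + ‖v‖)) ?_ ?_
    · intro n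
      calc ‖(G' (u (s n)) - G' v) (u (s n) - v)‖
          ≤ ‖G' (u (s n)) - G' v‖ * ‖u (s n) - v‖ := ContinuousLinearMap.le_opNorm _ _
        _ ≤ ‖G' (u (s n)) - G' v‖ * (R + ‖v‖) := by
            have h1 : ‖u (s n) - v‖ ≤ R + ‖v‖ := by
              calc ‖u (s n) - v‖ ≤ ‖u (s n)‖ + ‖v‖ := norm_sub_le _ _
                _ ≤ R + ‖v‖ := by linarith [hRu (s n)]
            have : (0:ℝ) ≤ ‖G' (u (s n)) - G' v‖ := norm_nonneg _
            nlinarith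
    · simpa using hGcs.mul_const (R + ‖v‖)
  have hT3 : Tendsto (fun n => G' v (u (s n) - v)) atTop (𝓝 0) := by
    have := hw (G' v)
    have h2 : Tendsto (fun n => G' v (u (s n)) - G' v v) atTop (𝓝 (G' v v - G' v v)) :=
      this.sub tendsto_const_nhds
    simpa [map_sub] using h2
  have hkey : Tendsto (fun n => J' (u (s n)) (u (s n) - v)) atTop (𝓝 0) := by
    have heq : (fun n => J' (u (s n)) (u (s n) - v)) =
        fun n => (J' (u (s n)) - l (s n) • G' (u (s n))) (u (s n) - v)
          + l (s n) * ((G' (u (s n)) - G' v) (u (s n) - v))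
          + l (s n) * (G' v (u (s n) - v)) := by
      funext n
      simp only [ContinuousLinearMap.sub_apply, ContinuousLinearMap.smul_apply,
        smul_eq_mul]
      ring
    rw [heq]
    have h2 : Tendsto (fun n => l (s n) * ((G' (u (s n)) - G' v) (u (s n) - v)))
        atTop (𝓝 (c * 0)) := hls.mul hT2
    have h3 : Tendsto (fun n => l (s n) * (G' v (u (s n) - v))) atTop (𝓝 (c * 0)) :=
      hls.mul hT3
    have := (hT1.add (by simpa using h2)).add (by simpa using h3)
    simpa using this
  have hlimsup : limsup (fun n => J' (u (s n)) (u (s n) - v)) atTop ≤ 0 := by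
    have := hkey.limsup_eq
    exact le_of_eq this
  have hconv : Tendsto (u ∘ s) atTop (𝓝 v) := by
    apply halpha (u ∘ s) v hw
    simpa [Function.comp] using hlimsup
  exact ⟨v, s, hs, hGv, hconv⟩
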